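/- Let p ∈ ℚ with -1 ≤ p ≤ 0 and set p' = -p/(2p+1) ∈ ℚ∞, with the convention p' = ∞ when p = -1/2 (equivalently, in coprime coordinates p' is the normalization of the pair (-a(p), 2a(p)+b(p))). Then: if c(p) ≤ 2 then c(p') ≤ 2, and if c(p) > 2 then c(p') < c(p). -/

import Mathlib

open Matrix

abbrev V6 := Fin 6 → ℤ

def C6 : Matrix (Fin 6) (Fin 6) ℤ :=
  !![1,0,-1,-1,1,1;
     0,1,-1,-1,1,1;
     0,0,1,0,-1,-1;
     0,0,0,1,-1,-1;
     0,0,0,0,1,0;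
     0,0,0,0,0,1]

/-- The bilinear form `⟨x,y⟩ = xᵀ C y` on `ℤ^6`. -/
def form (x y : V6) : ℤ := x ⬝ᵥ C6.mulVec y

/-- The quaternion `i`. -/
def qI : Quaternion ℤ := ⟨0,1,0,0⟩
/-- The quaternion `j`. -/
def qJ : Quaternion ℤ := ⟨0,0,1,0⟩
/-- The quaternion `k`. -/
def qK : Quaternion ℤ := ⟨0,0,0,1⟩

instance : DecidableEq (Quaternion ℤ) := fun x y =>
  decidable_of_iff (x.re = y.re ∧ x.imI = y.imI ∧ x.imJ = y.imJ ∧ x.imK = y.imK)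
    ⟨fun ⟨h1, h2, h3, h4⟩ => QuaternionAlgebra.ext h1 h2 h3 h4,
     fun h => by subst h; exact ⟨rfl, rfl, rfl, rfl⟩⟩

/-- The quaternion group `H = {±1, ±i, ±j, ±k}`. -/
def Hset : Finset (Quaternion ℤ) := {1, -1, qI, -qI, qJ, -qJ, qK, -qK}

/-- The subset `H⁺ = {1, i, j, k}`. -/
def Hplus : Finset (Quaternion ℤ) := {1, qI, qJ, qK}

/-- Index type for the three special slopes `0`, `1`, `∞`. -/
inductive Ty | zero | one | inf
deriving DecidableEq

def h0 : V6 := ![0,0,1,1,1,1]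
def h1 : V6 := ![1,1,2,2,1,1]
def hinf : V6 := ![1,1,1,1,0,0]

def hTy : Ty → V6
  | .zero => h0
  | .one => h1
  | .inf => hinf

/-- The vectors `v_t^x` for `t ∈ {0,1,∞}` and `x ∈ H⁺`. -/
def vposTy : Ty → Quaternion ℤ → V6
  | .zero, x => if x = 1 then ![0,0,1,0,1,0] else if x = qI then ![-1,0,0,0,0,0]
      else if x = qJ then ![0,0,1,0,0,1] else ![0,1,1,1,1,1]
  | .one, x => if x = 1 then ![1,0,1,1,1,0] else if x = qI then ![0,1,1,1,1,0]
      else if x = qJ then ![0,0,1,0,0,0] else ![1,1,2,1,1,1]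
  | .inf, x => if x = 1 then ![1,0,0,1,0,0] else if x = qI then ![1,1,1,1,1,0]
      else if x = qJ then ![0,0,0,0,0,-1] else ![1,0,1,0,0,0]

/-- The vectors `v_t^x` for `t ∈ {0,1,∞}` and `x ∈ H`, with `v_t^{-x} = h_t - v_t^x`. -/
def vTy (t : Ty) (x : Quaternion ℤ) : V6 :=
  if x ∈ Hplus then vposTy t x else hTy t - vposTy t (-x)

/-- `a(q)`: numerator, with `a(∞) = 1`. -/
def aQ : WithTop ℚ → ℤ := WithTop.recTopCoe 1 Rat.num

/-- `b(q)`: denominator, with `b(∞) = 0`. -/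
def bQ : WithTop ℚ → ℤ := WithTop.recTopCoe 0 (fun x => (x.den : ℤ))

/-- The type `t(q) ∈ {0,1,∞}` of a slope `q`. -/
def tyQ (q : WithTop ℚ) : Ty :=
  if aQ q % 2 = 0 then Ty.zero else if bQ q % 2 = 1 then Ty.one else Ty.inf

/-- `⌊n⌋₂ = n/2` for even `n` and `(n-1)/2` for odd `n`. -/
def half2 (n : ℤ) : ℤ := if Even n then n / 2 else (n - 1) / 2

/-- `h_q = b(q)·h₀ + a(q)·h_∞`. -/
def hQ (q : WithTop ℚ) : V6 := bQ q • h0 + aQ q • hinf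

/-- `v_q^x = v_{t(q)}^x + ⌊b(q)⌋₂·h₀ + ⌊a(q)⌋₂·h_∞`. -/
def vQ (q : WithTop ℚ) (x : Quaternion ℤ) : V6 :=
  vTy (tyQ q) x + half2 (bQ q) • h0 + half2 (aQ q) • hinf

/-- `rk e = ⟨e, h_∞⟩`. -/
def rk (e : V6) : ℤ := form e hinf

/-- `deg e = ⟨h₀, e⟩`. -/
def degV (e : V6) : ℤ := form h0 e

/-- `e` is positive if `rk e > 0`, or `rk e = 0` and `deg e > 0`. -/
def PosV (e : V6) : Prop := 0 < rk e ∨ (rk e = 0 ∧ 0 < degV e)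

/-- `d(p,q) = |a(q)b(p) - a(p)b(q)|`. -/
def dQ (p q : WithTop ℚ) : ℤ := |aQ q * bQ p - aQ p * bQ q|

/-- Complexity `c(p) = |a(p)| + |b(p)| + |a(p)+b(p)|`. -/
def cpx (p : WithTop ℚ) : ℤ := |aQ p| + |bQ p| + |aQ p + bQ p|


/-- The unfolding map `p ↦ -p/(2p+1)`, with value `∞` at `p = -1/2`. -/
def muD (p : ℚ) : WithTop ℚ :=
  if 2 * p + 1 = 0 then ⊤ else (((-p) / (2 * p + 1) : ℚ) : WithTop ℚ)

theorem stmt17 (p : ℚ) (h1 : -1 ≤ p) (h2 : p ≤ 0) :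
    (cpx (p : WithTop ℚ) ≤ 2 → cpx (muD p) ≤ 2) ∧
    (2 < cpx (p : WithTop ℚ) → cpx (muD p) < cpx (p : WithTop ℚ)) := by
  have hd0 : (0:ℤ) < p.den := Int.natCast_pos.mpr p.pos
  have hdQ : ((p.den:ℤ):ℚ) ≠ 0 := by positivity
  have hnum : (p.num:ℚ) = p * p.den := (div_eq_iff hdQ).mp (Rat.num_div_den p)
  have ha : p.num ≤ 0 := Rat.num_nonpos.mpr h2
  have hab : -(p.den:ℤ) ≤ p.num := by
    have := (Rat.le_iff _ _).mp h1
    simp at this; omega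
  have c1 : IsCoprime p.num (p.den:ℤ) := by
    rw [Int.isCoprime_iff_gcd_eq_one]; exact p.reduced
  have c2 : IsCoprime (-p.num) (2*p.num + (p.den:ℤ)) := by
    have := (c1.add_mul_left_right 2).neg_left
    rwa [show (p.den:ℤ) + p.num * 2 = 2*p.num + p.den from by ring] at this
  have hne1 : (p.den:ℤ) = 1 ∨ p.num ≠ -(p.den:ℤ) := by
    by_cases hEq : p.num = -(p.den:ℤ)
    · left
      have hu := c1.isUnit_of_dvd' ⟨-1, by omega⟩ dvd_rfl
      rcases Int.isUnit_iff.mp hu with h' | h' <;> omega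
    · right; exact hEq
  have hne2 : (p.den:ℤ) = 1 ∨ p.num ≠ 0 := by
    by_cases hEq : p.num = 0
    · left
      have hu := c1.isUnit_of_dvd' ⟨0, by omega⟩ dvd_rfl
      rcases Int.isUnit_iff.mp hu with h' | h' <;> omega
    · right; exact hEq
  by_cases h : 2 * p + 1 = 0
  · have hz : 2*p.num + (p.den:ℤ) = 0 := by
      have : ((2*p.num + (p.den:ℤ)):ℚ) = 0 := by
        push_cast [hnum]; linear_combination (p.den:ℚ) * h
      exact_mod_cast this
    have hu := c1.isUnit_of_dvd' dvd_rfl ⟨-2, by omega⟩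
    have hnum1 : p.num = -1 := by
      rcases Int.isUnit_iff.mp hu with h' | h' <;> omega
    have hden2 : (p.den:ℤ) = 2 := by omega
    have ht : cpx ⊤ = 2 := by decide
    simp only [muD, if_pos h, ht, cpx, aQ, bQ, WithTop.recTopCoe_coe, hnum1, hden2]
    norm_num
  · simp only [muD, if_neg h]
    have h2ab' : (2*p.num + p.den : ℤ) ≠ 0 := by
      intro hz
      apply h
      have hz' : ((2*p.num + (p.den:ℤ)):ℚ) = 0 := by exact_mod_cast hz
      push_cast [hnum] at hz'
      have : (2*p+1) * p.den = 0 := by linear_combination hz'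
      rcases mul_eq_zero.mp this with h' | h'
      · exact h'
      · exact absurd h' hdQ
    rcases lt_or_gt_of_ne h2ab' with hneg | hpos
    · have hqeq2 : (-p) / (2*p+1) = ((p.num : ℤ):ℚ) / ((-(2*p.num + p.den) : ℤ):ℚ) := by
        rw [div_eq_div_iff h (Int.cast_ne_zero.mpr (by omega))]
        push_cast [hnum]; ring
      have cop : (p.num).natAbs.Coprime (-(2*p.num + p.den)).natAbs :=
        Int.isCoprime_iff_gcd_eq_one.mp (by simpa using c2.neg_left.neg_right)
      have hn := Rat.num_div_eq_of_coprime (b := -(2*p.num + p.den)) (by omega) cop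
      have hdn := Rat.den_div_eq_of_coprime (b := -(2*p.num + p.den)) (by omega) cop
      rw [hqeq2]
      simp only [cpx, aQ, bQ, WithTop.recTopCoe_coe, hn, hdn]
      rw [abs_of_nonpos ha, abs_of_nonneg (le_of_lt hd0),
        abs_of_nonneg (by omega : (0:ℤ) ≤ p.num + p.den),
        abs_of_nonneg (by omega : (0:ℤ) ≤ -(2*p.num + (p.den:ℤ))),
        abs_of_nonpos (by omega : p.num + -(2*p.num + (p.den:ℤ)) ≤ 0)]
      omega
    · have hqeq : (-p) / (2*p+1) = ((-p.num : ℤ):ℚ) / (((2*p.num + p.den) : ℤ):ℚ) := by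
        rw [div_eq_div_iff h (Int.cast_ne_zero.mpr (by omega))]
        push_cast [hnum]; ring
      have cop : (-p.num).natAbs.Coprime (2*p.num + p.den).natAbs :=
        Int.isCoprime_iff_gcd_eq_one.mp c2
      have hn := Rat.num_div_eq_of_coprime (b := 2*p.num + p.den) hpos cop
      have hdn := Rat.den_div_eq_of_coprime (b := 2*p.num + p.den) hpos cop
      rw [hqeq]
      simp only [cpx, aQ, bQ, WithTop.recTopCoe_coe, hn, hdn]
      rw [abs_of_nonpos ha, abs_of_nonneg (le_of_lt hd0),
        abs_of_nonneg (by omega : (0:ℤ) ≤ p.num + p.den),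
        abs_of_nonneg (by omega : (0:ℤ) ≤ -p.num),
        abs_of_nonneg (by omega : (0:ℤ) ≤ 2*p.num + (p.den:ℤ)),
        abs_of_nonneg (by omega : (0:ℤ) ≤ -p.num + (2*p.num + (p.den:ℤ)))]
      omega
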